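/- arXiv:2205.03007 — 2 statements merged into one kernel-verified Lean document; each statement's English description precedes it below -/
import Mathlib

section
/- The ring of integers of the biquadratic number field K = ℚ(i,√5) is ℤ[i,φ], the ℤ-span of {1, φ, i, iφ}: an element of K is integral over ℤ if and only if it lies in ℤ[i,φ]. -/
/-- `K = ℚ(i, √5)` as an intermediate field of `ℂ/ℚ`. -/
noncomputable def K : IntermediateField ℚ ℂ :=
  IntermediateField.adjoin ℚ {Complex.I, (Real.sqrt 5 : ℂ)}

/-- `i` as an element of `K`. -/
noncomputable def iK : K := ⟨Complex.I, IntermediateField.subset_adjoin ℚ _ (by simp)⟩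

/-- `√5` as an element of `K`. -/
noncomputable def sqrt5K : K := ⟨(Real.sqrt 5 : ℂ), IntermediateField.subset_adjoin ℚ _ (by simp)⟩

/-- The golden ratio `φ = (1 + √5)/2` as an element of `K`. -/
noncomputable def phiK : K := (1 + sqrt5K) / 2

/-- `ℤ[i,φ]`, the subring of `K` generated by `i` and `φ`
(equivalently, the `ℤ`-span of `{1, φ, i, iφ}`). -/
noncomputable def Ziphi : Subring K := Subring.closure {iK, phiK}

/-! ### Auxiliary material -/

open Polynomial Complex

noncomputable def sC : ℂ := (Real.sqrt 5 : ℝ)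

lemma hs2 : sC ^ 2 = 5 := by
  simp only [sC, ← Complex.ofReal_pow]
  norm_cast
  rw [Real.sq_sqrt]; norm_num

lemma hI2 : (Complex.I) ^ 2 = -1 := Complex.I_sq

lemma irr5 : Irrational (Real.sqrt 5) := by
  have : Irrational (Real.sqrt (5:ℕ)) := (by norm_num : Nat.Prime 5).irrational_sqrt
  simpa using this

/-- The span subalgebra. -/
noncomputable def S5 : Subalgebra ℚ ℂ where
  carrier := {z | ∃ q1 q2 q3 q4 : ℚ, z = q1 + q2 * sC + q3 * Complex.I + q4 * sC * Complex.I}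
  zero_mem' := ⟨0,0,0,0, by push_cast; ring⟩
  one_mem' := ⟨1,0,0,0, by push_cast; ring⟩
  add_mem' := by
    rintro a b ⟨q1,q2,q3,q4,rfl⟩ ⟨r1,r2,r3,r4,rfl⟩
    exact ⟨q1+r1, q2+r2, q3+r3, q4+r4, by push_cast; ring⟩
  mul_mem' := by
    rintro a b ⟨q1,q2,q3,q4,rfl⟩ ⟨r1,r2,r3,r4,rfl⟩
    refine ⟨q1*r1 + 5*q2*r2 - q3*r3 - 5*q4*r4,
            q1*r2 + q2*r1 - q3*r4 - q4*r3,
            q1*r3 + q3*r1 + 5*q2*r4 + 5*q4*r2,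
            q1*r4 + q4*r1 + q2*r3 + q3*r2, ?_⟩
    have h1 := hs2
    have h2 := hI2
    push_cast
    linear_combination (((q2:ℂ)*r2 + (q2*r4+q4*r2)*Complex.I + q4*r4*Complex.I^2)) * h1 +
      (((q3:ℂ)*r3 + (q3*r4+q4*r3)*sC + 5*q4*r4)) * h2
  algebraMap_mem' := fun r => ⟨r, 0, 0, 0, by rw [eq_ratCast (algebraMap ℚ ℂ) r]; push_cast; ring⟩

lemma I_int : IsIntegral ℤ Complex.I :=
  ⟨X^2 + 1, by monicity!, by simp⟩

lemma sC_int : IsIntegral ℤ sC :=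
  ⟨X^2 - 5, by monicity!, by simp [hs2]⟩

lemma sR_int : IsIntegral ℤ (Real.sqrt 5) :=
  ⟨X^2 - 5, by monicity!, by simp [Real.sq_sqrt (by norm_num : (5:ℝ) ≥ 0)]⟩

lemma mem_S5_of_mem_K {z : ℂ} (hz : z ∈ K) :
    ∃ q1 q2 q3 q4 : ℚ, z = q1 + q2 * sC + q3 * Complex.I + q4 * sC * Complex.I := by
  have halg : ∀ x ∈ ({Complex.I, (Real.sqrt 5 : ℂ)} : Set ℂ), IsAlgebraic ℚ x := by
    rintro x (rfl | rfl)
    · exact (I_int.tower_top (A := ℚ)).isAlgebraic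
    · exact (sC_int.tower_top (A := ℚ)).isAlgebraic
  have h1 : K.toSubalgebra = Algebra.adjoin ℚ {Complex.I, (Real.sqrt 5 : ℂ)} :=
    IntermediateField.adjoin_toSubalgebra_of_isAlgebraic halg
  have h2 : Algebra.adjoin ℚ {Complex.I, (Real.sqrt 5 : ℂ)} ≤ S5 := by
    apply Algebra.adjoin_le
    rintro x (rfl | rfl)
    · exact ⟨0,0,1,0, by push_cast; ring⟩
    · exact ⟨0,1,0,0, by show _ = _ + _ + _ + _; push_cast; simp [sC]⟩
  have : z ∈ K.toSubalgebra := hz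
  exact h2 (h1 ▸ this)

lemma Qcoeff (u v : ℚ) (h : IsIntegral ℤ ((u:ℝ) + v * Real.sqrt 5)) :
    ∃ m n : ℤ, (2*u : ℚ) = m ∧ (u^2 - 5*v^2 : ℚ) = n := by
  by_cases hv : v = 0
  · subst hv
    have h' : IsIntegral ℤ (algebraMap ℚ ℝ u) := by
      rw [eq_ratCast (algebraMap ℚ ℝ) u]
      simpa using h
    have hu : IsIntegral ℤ u := (isIntegral_algebraMap_iff (algebraMap ℚ ℝ).injective).mp h'
    obtain ⟨k, hk⟩ := IsIntegrallyClosed.isIntegral_iff.mp hu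
    rw [eq_intCast] at hk
    exact ⟨2*k, k^2, by push_cast [← hk]; ring, by push_cast [← hk]; ring⟩
  · set t : ℝ := (u:ℝ) + v * Real.sqrt 5 with ht
    have hirr : t ∉ (algebraMap ℚ ℝ).range := by
      rintro ⟨q, hq⟩
      rw [eq_ratCast] at hq
      apply irr5
      refine ⟨(q - u)/v, ?_⟩
      push_cast
      field_simp
      linarith [hq]
    set b : ℚ := -(2*u) with hb
    set c : ℚ := u^2 - 5*v^2 with hc
    set P : ℚ[X] := X^2 + C b * X + C c with hP
    have hPdeg : P.natDegree = 2 := by rw [hP]; compute_degree!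
    have hPmonic : P.Monic := by
      rw [Polynomial.Monic, Polynomial.leadingCoeff, hPdeg, hP]
      simp [Polynomial.coeff_X_pow, Polynomial.coeff_C]
    have hProot : Polynomial.aeval t P = 0 := by
      have h5 : Real.sqrt 5 * Real.sqrt 5 = 5 := Real.mul_self_sqrt (by norm_num)
      simp [hP, ht, hb, hc]
      push_cast
      ring_nf
      linear_combination (v:ℝ)^2 * h5
    have hQint : IsIntegral ℚ t := h.tower_top
    have hdvd : minpoly ℚ t ∣ P := minpoly.dvd ℚ t hProot
    have hdeg2 : 2 ≤ (minpoly ℚ t).natDegree := (minpoly.two_le_natDegree_iff hQint).mpr hirr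
    have hmin : minpoly ℚ t = P := by
      refine (Polynomial.eq_of_monic_of_dvd_of_natDegree_le (minpoly.monic hQint) hPmonic hdvd ?_).symm
      omega
    have hmap : minpoly ℚ t = (minpoly ℤ t).map (algebraMap ℤ ℚ) :=
      minpoly.isIntegrallyClosed_eq_field_fractions ℚ ℝ h
    have hco := hmin.symm.trans hmap
    refine ⟨-((minpoly ℤ t).coeff 1), (minpoly ℤ t).coeff 0, ?_, ?_⟩
    · have := congrArg (fun p => Polynomial.coeff p 1) hco
      simp [hP, Polynomial.coeff_map, Polynomial.coeff_X_pow, Polynomial.coeff_C] at this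
      rw [hb] at this
      push_cast
      linarith
    · have := congrArg (fun p => Polynomial.coeff p 0) hco
      simp [hP, Polynomial.coeff_map, Polynomial.coeff_X_pow, Polynomial.coeff_C] at this
      rw [hc] at this
      exact this

lemma zmod4 : ∀ x y : ZMod 4, x^2 - 5*y^2 = 0 →
    (ZMod.castHom (by norm_num : (2:ℕ) ∣ 4) (ZMod 2)) (x - y) = 0 := by decide

lemma Q5 (u v : ℚ) (h : IsIntegral ℤ ((u:ℝ) + v * Real.sqrt 5)) :
    ∃ a b : ℤ, u = a + b/2 ∧ v = b/2 := by
  obtain ⟨m, n, hm, hn⟩ := Qcoeff u v h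
  have h5 : Real.sqrt 5 * Real.sqrt 5 = 5 := Real.mul_self_sqrt (by norm_num)
  have ht' : IsIntegral ℤ (((5*v : ℚ):ℝ) + (u:ℚ) * Real.sqrt 5) := by
    have := sR_int.mul h
    have heq : Real.sqrt 5 * ((u:ℝ) + v * Real.sqrt 5) = ((5*v : ℚ):ℝ) + (u:ℚ) * Real.sqrt 5 := by
      push_cast
      linear_combination (v:ℝ) * h5
    rwa [heq] at this
  obtain ⟨m', n', hm', _⟩ := Qcoeff (5*v) u ht'
  have key : (m'^2 : ℤ) = 5*m^2 - 20*n := by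
    have : ((m'^2 : ℤ) : ℚ) = ((5*m^2 - 20*n : ℤ) : ℚ) := by
      push_cast
      linear_combination (-(10*v+m'))*hm' + 5*(2*u+m)*hm + (-20)*hn
    exact_mod_cast this
  have h5dvd : (5:ℤ) ∣ m' := by
    exact (by norm_num : Prime (5:ℤ)).dvd_of_dvd_pow
      (show (5:ℤ) ∣ m'^2 from ⟨m^2 - 4*n, by linarith⟩)
  obtain ⟨k, hk⟩ := h5dvd
  have key2 : (m^2 - 5*k^2 : ℤ) = 4*n := by
    have h25 : (25*k^2 : ℤ) = 5*m^2 - 20*n := by rw [hk] at key; linarith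
    linarith
  have hpar : (2:ℤ) ∣ m - k := by
    have h2 : ((m:ZMod 4))^2 - 5*((k:ZMod 4))^2 = 4*((n:ZMod 4)) := by
      exact_mod_cast congrArg (Int.cast : ℤ → ZMod 4) key2
    have h40 : ((m:ZMod 4))^2 - 5*((k:ZMod 4))^2 = 0 := by
      rw [h2, show (4:ZMod 4) = 0 by decide, zero_mul]
    have hz := zmod4 _ _ h40
    rw [← Int.cast_sub, ZMod.castHom_apply, ZMod.cast_intCast (by norm_num : (2:ℕ) ∣ 4)] at hz
    exact (ZMod.intCast_zmod_eq_zero_iff_dvd _ 2).mp hz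
  obtain ⟨j, hj⟩ := hpar
  refine ⟨j, k, ?_, ?_⟩
  · have hmq : (m:ℚ) = 2*j + k := by exact_mod_cast (by omega : m = 2*j + k)
    rw [hmq] at hm
    linarith
  · have hkq : (m':ℚ) = 5*k := by exact_mod_cast hk
    rw [hkq] at hm'
    linarith

lemma zmod4' : ∀ x y z w : ZMod 4, x^2+y^2+z^2+w^2 = 0 → 2*x*y+y^2+2*z*w+w^2 = 0 →
    (ZMod.castHom (by norm_num : (2:ℕ) ∣ 4) (ZMod 2)) x = 0 ∧
    (ZMod.castHom (by norm_num : (2:ℕ) ∣ 4) (ZMod 2)) y = 0 ∧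
    (ZMod.castHom (by norm_num : (2:ℕ) ∣ 4) (ZMod 2)) z = 0 ∧
    (ZMod.castHom (by norm_num : (2:ℕ) ∣ 4) (ZMod 2)) w = 0 := by decide

lemma even_of_zmod4 {a : ℤ} (h : (ZMod.castHom (by norm_num : (2:ℕ) ∣ 4) (ZMod 2)) ((a : ZMod 4)) = 0) :
    (2:ℤ) ∣ a := by
  rw [ZMod.castHom_apply, ZMod.cast_intCast (by norm_num : (2:ℕ) ∣ 4)] at h
  exact (ZMod.intCast_zmod_eq_zero_iff_dvd _ 2).mp h

lemma iK_int : IsIntegral ℤ iK := by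
  refine ⟨X^2 + 1, by monicity!, ?_⟩
  have h : iK^2 + 1 = 0 := by
    apply Subtype.ext
    push_cast [iK]
    simp [Complex.I_sq]
  simpa using h

lemma phiK_int : IsIntegral ℤ phiK := by
  refine ⟨X^2 - X - 1, by monicity!, ?_⟩
  have h : phiK^2 - phiK - 1 = 0 := by
    apply Subtype.ext
    have h2 : ((Real.sqrt 5 : ℝ):ℂ)^2 = 5 := hs2
    have hphi : ((phiK : K) : ℂ) = (1 + ((Real.sqrt 5:ℝ):ℂ))/2 := rfl
    push_cast
    rw [hphi]
    linear_combination (1/4 : ℂ) * h2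
  simpa using h

/-- The ring of integers of K = ℚ(i,√5) is exactly ℤ[i,φ]. -/
theorem stmt2 (x : K) : IsIntegral ℤ x ↔ x ∈ Ziphi := by
  constructor
  · intro h
    -- pass to ℂ
    have hz : IsIntegral ℤ (x : ℂ) := h.map (algebraMap K ℂ).toIntAlgHom
    have hzdef : True := trivial
    obtain ⟨q1, q2, q3, q4, hq⟩ := mem_S5_of_mem_K x.2
    have h5 : Real.sqrt 5 * Real.sqrt 5 = 5 := Real.mul_self_sqrt (by norm_num)
    have hre : (x:ℂ).re = (q1:ℝ) + q2 * Real.sqrt 5 := by rw [hq]; simp [sC]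
    have him : (x:ℂ).im = (q3:ℝ) + q4 * Real.sqrt 5 := by rw [hq]; simp [sC]
    have hzc : IsIntegral ℤ ((starRingEnd ℂ) (x:ℂ)) := hz.map (starRingEnd ℂ).toIntAlgHom
    -- 2 * re is integral
    have h2re : IsIntegral ℤ (((2*q1 : ℚ):ℝ) + (2*q2 : ℚ) * Real.sqrt 5) := by
      have hsum := hz.add hzc
      rw [Complex.add_conj] at hsum
      have : IsIntegral ℤ ((2*(x:ℂ).re : ℝ)) := by
        rw [show ((2*(x:ℂ).re : ℝ):ℂ) = algebraMap ℝ ℂ (2*(x:ℂ).re) from rfl] at hsum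
        exact (isIntegral_algebraMap_iff Complex.ofReal_injective).mp hsum
      have heq : (2*(x:ℂ).re : ℝ) = ((2*q1 : ℚ):ℝ) + (2*q2 : ℚ) * Real.sqrt 5 := by
        rw [hre]; push_cast; ring
      rwa [heq] at this
    -- 2 * im is integral
    have h2im : IsIntegral ℤ (((2*q3 : ℚ):ℝ) + (2*q4 : ℚ) * Real.sqrt 5) := by
      have hIz : IsIntegral ℤ (Complex.I * (x:ℂ)) := I_int.mul hz
      have hIzc : IsIntegral ℤ ((starRingEnd ℂ) (Complex.I * (x:ℂ))) :=
        hIz.map (starRingEnd ℂ).toIntAlgHom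
      have hsum := hIz.add hIzc
      rw [Complex.add_conj] at hsum
      have hIzre : (Complex.I * (x:ℂ)).re = -(x:ℂ).im := by simp
      rw [hIzre] at hsum
      have : IsIntegral ℤ ((2*(-(x:ℂ).im) : ℝ)) := by
        rw [show ((2*(-(x:ℂ).im) : ℝ):ℂ) = algebraMap ℝ ℂ (2*(-(x:ℂ).im)) from rfl] at hsum
        exact (isIntegral_algebraMap_iff Complex.ofReal_injective).mp hsum
      have hneg := this.neg
      have heq : -(2*(-(x:ℂ).im) : ℝ) = ((2*q3 : ℚ):ℝ) + (2*q4 : ℚ) * Real.sqrt 5 := by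
        rw [him]; push_cast; ring
      rwa [heq] at hneg
    -- norm is integral
    have hnorm : IsIntegral ℤ
        (((q1^2+5*q2^2+q3^2+5*q4^2 : ℚ):ℝ) + (2*q1*q2+2*q3*q4 : ℚ) * Real.sqrt 5) := by
      have hprod := hz.mul hzc
      rw [Complex.mul_conj] at hprod
      have : IsIntegral ℤ ((Complex.normSq (x:ℂ) : ℝ)) := by
        rw [show ((Complex.normSq (x:ℂ) : ℝ):ℂ) = algebraMap ℝ ℂ (Complex.normSq (x:ℂ)) from rfl] at hprod
        exact (isIntegral_algebraMap_iff Complex.ofReal_injective).mp hprod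
      have heq : (Complex.normSq (x:ℂ) : ℝ) =
          ((q1^2+5*q2^2+q3^2+5*q4^2 : ℚ):ℝ) + (2*q1*q2+2*q3*q4 : ℚ) * Real.sqrt 5 := by
        rw [Complex.normSq_apply, hre, him]
        push_cast
        linear_combination ((q2:ℝ)^2 + (q4:ℝ)^2) * h5
      rwa [heq] at this
    obtain ⟨a, b, hab1, hab2⟩ := Q5 _ _ h2re
    obtain ⟨c, d, hcd1, hcd2⟩ := Q5 _ _ h2im
    obtain ⟨e, f, hef1, hef2⟩ := Q5 _ _ hnorm
    have hq1 : q1 = (a:ℚ)/2 + (b:ℚ)/4 := by linarith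
    have hq2 : q2 = (b:ℚ)/4 := by linarith
    have hq3 : q3 = (c:ℚ)/2 + (d:ℚ)/4 := by linarith
    have hq4 : q4 = (d:ℚ)/4 := by linarith
    rw [hq1, hq2, hq3, hq4] at hef1 hef2
    have hA : (a^2+b^2+c^2+d^2 : ℤ) = 4*e := by
      have : ((a^2+b^2+c^2+d^2 : ℤ) : ℚ) = ((4*e : ℤ) : ℚ) := by
        push_cast
        linear_combination 4*hef1 - 4*hef2
      exact_mod_cast this
    have hB : (2*a*b+b^2+2*c*d+d^2 : ℤ) = 4*f := by
      have : ((2*a*b+b^2+2*c*d+d^2 : ℤ) : ℚ) = ((4*f : ℤ) : ℚ) := by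
        push_cast
        linear_combination 8*hef2
      exact_mod_cast this
    -- mod 4 arithmetic
    have hA4 : ((a:ZMod 4))^2+((b:ZMod 4))^2+((c:ZMod 4))^2+((d:ZMod 4))^2 = 0 := by
      have := congrArg (Int.cast : ℤ → ZMod 4) hA
      push_cast at this
      rw [this, show ((4:ZMod 4)) = 0 by decide, zero_mul]
    have hB4 : 2*((a:ZMod 4))*((b:ZMod 4))+((b:ZMod 4))^2+2*((c:ZMod 4))*((d:ZMod 4))+((d:ZMod 4))^2 = 0 := by
      have := congrArg (Int.cast : ℤ → ZMod 4) hB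
      push_cast at this
      rw [this, show ((4:ZMod 4)) = 0 by decide, zero_mul]
    obtain ⟨hza, hzb, hzc', hzd⟩ := zmod4' _ _ _ _ hA4 hB4
    obtain ⟨a₀, ha₀⟩ := even_of_zmod4 hza
    obtain ⟨b₀, hb₀⟩ := even_of_zmod4 hzb
    obtain ⟨c₀, hc₀⟩ := even_of_zmod4 hzc'
    obtain ⟨d₀, hd₀⟩ := even_of_zmod4 hzd
    -- now x = a₀ + b₀ φ + c₀ i + d₀ i φ
    have hxval : x = (a₀ : K) + (b₀ : K) * phiK + (c₀ : K) * iK + (d₀ : K) * (iK * phiK) := by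
      apply Subtype.ext
      have hphi : ((phiK : K) : ℂ) = (1 + ((Real.sqrt 5:ℝ):ℂ))/2 := rfl
      have hiK : ((iK : K) : ℂ) = Complex.I := rfl
      push_cast
      rw [hphi, hiK, hq]
      have e1 : (q1:ℂ) = (a₀:ℂ) + (b₀:ℂ)/2 := by
        have : q1 = (a₀:ℚ) + (b₀:ℚ)/2 := by rw [hq1, ha₀, hb₀]; push_cast; ring
        exact_mod_cast this
      have e2 : (q2:ℂ) = (b₀:ℂ)/2 := by
        have : q2 = (b₀:ℚ)/2 := by rw [hq2, hb₀]; push_cast; ring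
        exact_mod_cast this
      have e3 : (q3:ℂ) = (c₀:ℂ) + (d₀:ℂ)/2 := by
        have : q3 = (c₀:ℚ) + (d₀:ℚ)/2 := by rw [hq3, hc₀, hd₀]; push_cast; ring
        exact_mod_cast this
      have e4 : (q4:ℂ) = (d₀:ℂ)/2 := by
        have : q4 = (d₀:ℚ)/2 := by rw [hq4, hd₀]; push_cast; ring
        exact_mod_cast this
      simp only [sC]
      linear_combination e1 + ((Real.sqrt 5:ℝ):ℂ) * e2 + Complex.I * e3 +
        ((Real.sqrt 5:ℝ):ℂ) * Complex.I * e4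
    rw [hxval]
    have hiKmem : iK ∈ Ziphi := Subring.subset_closure (by simp)
    have hphiKmem : phiK ∈ Ziphi := Subring.subset_closure (by simp)
    refine Subring.add_mem _ (Subring.add_mem _ (Subring.add_mem _ ?_ ?_) ?_) ?_
    · exact intCast_mem _ _
    · exact Subring.mul_mem _ (intCast_mem _ _) hphiKmem
    · exact Subring.mul_mem _ (intCast_mem _ _) hiKmem
    · exact Subring.mul_mem _ (intCast_mem _ _) (Subring.mul_mem _ hiKmem hphiKmem)
  · intro hx
    have hle : Ziphi ≤ (integralClosure ℤ K).toSubring := by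
      apply Subring.closure_le.mpr
      rintro y (rfl | rfl)
      · exact iK_int
      · exact phiK_int
    exact hle hx
end

section
/- In the ring ℤ[i,φ], the element 1 + i is irreducible, and 2 = (1 + i)(1 − i). -/
lemma one_add_i_mem : (1 : K) + iK ∈ Ziphi :=
  Subring.add_mem _ (Subring.one_mem _) (Subring.subset_closure (by simp))

lemma one_sub_i_mem : (1 : K) - iK ∈ Ziphi :=
  Subring.sub_mem _ (Subring.one_mem _) (Subring.subset_closure (by simp))

lemma iK_sq : iK ^ 2 = -1 := by
  apply Subtype.ext
  push_cast [iK]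
  simp [Complex.I_sq]

lemma sqrt5K_sq : sqrt5K ^ 2 = 5 := by
  apply Subtype.ext
  push_cast [sqrt5K]
  rw [← Complex.ofReal_pow, Real.sq_sqrt (by norm_num : (5:ℝ) ≥ 0)]
  norm_cast

lemma phiK_sq : phiK ^ 2 = phiK + 1 := by
  rw [phiK]
  field_simp
  linear_combination sqrt5K_sq

/-- The element of `K` with coordinates `a + bφ + ci + d·iφ`. -/
noncomputable def zc (a b c d : ℤ) : K :=
  (a : K) + (b : K) * phiK + (c : K) * iK + (d : K) * (iK * phiK)

lemma zc_congr {a b c d a' b' c' d' : ℤ} (ha : a = a') (hb : b = b') (hc : c = c')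
    (hd : d = d') : zc a b c d = zc a' b' c' d' := by subst ha hb hc hd; rfl

lemma iK_mem : iK ∈ Ziphi := Subring.subset_closure (by simp)
lemma phiK_mem : phiK ∈ Ziphi := Subring.subset_closure (by simp)

lemma zc_mem (a b c d : ℤ) : zc a b c d ∈ Ziphi := by
  refine Subring.add_mem _ (Subring.add_mem _ (Subring.add_mem _ ?_ ?_) ?_) ?_
  · exact intCast_mem _ _
  · exact Subring.mul_mem _ (intCast_mem _ _) phiK_mem
  · exact Subring.mul_mem _ (intCast_mem _ _) iK_mem
  · exact Subring.mul_mem _ (intCast_mem _ _) (Subring.mul_mem _ iK_mem phiK_mem)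

lemma zc_mul (a b c d e f g h : ℤ) :
    zc a b c d * zc e f g h =
      zc (a*e + b*f - c*g - d*h) (a*f + b*e + b*f - c*h - d*g - d*h)
         (a*g + b*h + c*e + d*f) (a*h + b*g + b*h + c*f + d*e + d*f) := by
  simp only [zc]
  push_cast
  linear_combination ((c:K)*g + (c:K)*h*phiK + (d:K)*g*phiK + (d:K)*h*phiK^2) * iK_sq +
    ((b:K)*f + (b:K)*h*iK + (d:K)*f*iK - (d:K)*h) * phiK_sq

lemma zc_add (a b c d e f g h : ℤ) :
    zc a b c d + zc e f g h = zc (a+e) (b+f) (c+g) (d+h) := by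
  simp only [zc]; push_cast; ring

lemma zc_neg (a b c d : ℤ) : -zc a b c d = zc (-a) (-b) (-c) (-d) := by
  simp only [zc]; push_cast; ring

lemma zc_zero : (0 : K) = zc 0 0 0 0 := by simp [zc]

lemma zc_one : (1 : K) = zc 1 0 0 0 := by simp [zc]

/-- Every element of `ℤ[i,φ]` has integer coordinates in the basis `1, φ, i, iφ`. -/
lemma exists_coords (z : K) (hz : z ∈ Ziphi) : ∃ a b c d : ℤ, z = zc a b c d := by
  induction hz using Subring.closure_induction with
  | mem x hx =>
    rw [Set.mem_insert_iff, Set.mem_singleton_iff] at hx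
    rcases hx with rfl | rfl
    · exact ⟨0, 0, 1, 0, by simp [zc]⟩
    · exact ⟨0, 1, 0, 0, by simp [zc]⟩
  | zero => exact ⟨0, 0, 0, 0, zc_zero⟩
  | one => exact ⟨1, 0, 0, 0, zc_one⟩
  | add x y hx hy ihx ihy =>
    obtain ⟨a, b, c, d, rfl⟩ := ihx
    obtain ⟨e, f, g, h, rfl⟩ := ihy
    exact ⟨_, _, _, _, zc_add a b c d e f g h⟩
  | neg x hx ihx =>
    obtain ⟨a, b, c, d, rfl⟩ := ihx
    exact ⟨_, _, _, _, zc_neg a b c d⟩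
  | mul x y hx hy ihx ihy =>
    obtain ⟨a, b, c, d, rfl⟩ := ihx
    obtain ⟨e, f, g, h, rfl⟩ := ihy
    exact ⟨_, _, _, _, zc_mul a b c d e f g h⟩

lemma int_gold_inj {a b e f : ℤ}
    (h : (a : ℝ) + b * ((1 + Real.sqrt 5) / 2) = e + f * ((1 + Real.sqrt 5) / 2)) :
    a = e ∧ b = f := by
  by_cases hbf : b = f
  · subst hbf
    refine ⟨?_, rfl⟩
    exact_mod_cast add_right_cancel h
  · exfalso
    have hfb : ((f : ℝ) - b) ≠ 0 := by
      intro h0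
      have hfb' : (f : ℝ) = (b : ℝ) := by linarith
      have : f = b := by exact_mod_cast hfb'
      exact hbf this.symm
    have hgr : (1 + Real.sqrt 5) / 2 = ((a : ℝ) - e) / ((f : ℝ) - b) := by
      rw [eq_div_iff hfb]
      linear_combination -h
    apply Real.goldenRatio_irrational
    refine ⟨((a - e : ℤ) : ℚ) / ((f - b : ℤ) : ℚ), ?_⟩
    show ((((a - e : ℤ) : ℚ) / ((f - b : ℤ) : ℚ) : ℚ) : ℝ) = (1 + Real.sqrt 5) / 2
    push_cast
    rw [hgr]

lemma coe_phiK : (phiK : ℂ) = (((1 + Real.sqrt 5) / 2 : ℝ) : ℂ) := by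
  have h : phiK * 2 = 1 + sqrt5K := by
    rw [phiK]; field_simp
  have hC : (phiK : ℂ) * 2 = 1 + (Real.sqrt 5 : ℂ) := by
    have := congrArg (Subtype.val) h
    push_cast at this
    exact this
  push_cast
  linear_combination hC / 2

/-- The coordinates are unique. -/
lemma zc_inj {a b c d e f g h : ℤ} (hzc : zc a b c d = zc e f g h) :
    a = e ∧ b = f ∧ c = g ∧ d = h := by
  have hC : (zc a b c d : ℂ) = (zc e f g h : ℂ) := by rw [hzc]
  simp only [zc] at hC
  push_cast [coe_phiK, iK] at hC
  have hre := congrArg Complex.re hC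
  have him := congrArg Complex.im hC
  simp [Complex.add_re, Complex.add_im, Complex.mul_re, Complex.mul_im] at hre him
  obtain ⟨h1, h2⟩ := int_gold_inj (a := a) (b := b) (e := e) (f := f) (by linarith [hre])
  obtain ⟨h3, h4⟩ := int_gold_inj (a := c) (b := d) (e := g) (f := h) (by linarith [him])
  exact ⟨h1, h2, h3, h4⟩

/-- The norm form on coordinates. -/
def Nf (a b c d : ℤ) : ℤ :=
  (a^2 + a*b - b^2 - (c^2 + c*d - d^2))^2 + (2*a*c + a*d + b*c - 2*b*d)^2

lemma Nf_mul (a b c d e f g h : ℤ) :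
    Nf (a*e + b*f - c*g - d*h) (a*f + b*e + b*f - c*h - d*g - d*h)
       (a*g + b*h + c*e + d*f) (a*h + b*g + b*h + c*f + d*e + d*f) =
      Nf a b c d * Nf e f g h := by
  simp only [Nf]; ring

lemma Nf_nonneg (a b c d : ℤ) : 0 ≤ Nf a b c d := by rw [Nf]; positivity

lemma sq_add_sq_eq_two {x y : ℤ} (h : x^2 + y^2 = 2) : x^2 = 1 ∧ y^2 = 1 := by
  have hx1 : x ≤ 2 := by nlinarith [sq_nonneg (x - 2), sq_nonneg y]
  have hx2 : -2 ≤ x := by nlinarith [sq_nonneg (x + 2), sq_nonneg y]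
  have hy1 : y ≤ 2 := by nlinarith [sq_nonneg (y - 2), sq_nonneg x]
  have hy2 : -2 ≤ y := by nlinarith [sq_nonneg (y + 2), sq_nonneg x]
  interval_cases x <;> interval_cases y <;> simp_all

lemma cast_one_of_sq_eq_one {s : ℤ} (h : s^2 = 1) : ((s : ZMod 2)) = 1 := by
  have h' : (s - 1) * (s + 1) = 0 := by linear_combination h
  rcases mul_eq_zero.mp h' with h'' | h''
  · have hs : s = 1 := by omega
    rw [hs]; decide
  · have hs : s = -1 := by omega
    rw [hs]; decide

lemma Nf_ne_two (a b c d : ℤ) : Nf a b c d ≠ 2 := by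
  intro hN
  rw [Nf] at hN
  obtain ⟨hs2, hr2⟩ := sq_add_sq_eq_two hN
  have hsodd := cast_one_of_sq_eq_one hs2
  have hrodd := cast_one_of_sq_eq_one hr2
  push_cast at hsodd hrodd
  have key : ∀ x y z w : ZMod 2,
      ¬(x^2 + x*y - y^2 - (z^2 + z*w - w^2) = 1 ∧ 2*x*z + x*w + y*z - 2*y*w = 1) := by
    decide
  exact key (a : ZMod 2) (b : ZMod 2) (c : ZMod 2) (d : ZMod 2) ⟨hsodd, hrodd⟩

/-- The explicit inverse identity: `x · (x̄ · σx · σx̄) = N(x)`. -/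
lemma zc_mul_inv (a b c d : ℤ) :
    zc a b c d * zc (-b*d^2 - 2*b*c*d - b^3 + 2*a*d^2 + 2*a*c*d + a*c^2 + 2*a^2*b + a^3)
      (b*d^2 + b*c^2 + b^3 - a*d^2 - 2*a*c*d - a*b^2 - a^2*b)
      (d^3 - 2*c^2*d - c^3 + b^2*d - 2*b^2*c + 2*a*b*d - 2*a*b*c - a^2*c)
      (-d^3 + c*d^2 + c^2*d - b^2*d + b^2*c + 2*a*b*c - a^2*d) =
    zc (Nf a b c d) 0 0 0 := by
  rw [zc_mul]
  exact zc_congr (by rw [Nf]; ring) (by ring) (by ring) (by ring)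

lemma isUnit_of_norm_one (z : Ziphi) (a b c d : ℤ) (hz : (z : K) = zc a b c d)
    (hN : Nf a b c d = 1) : IsUnit z := by
  refine IsUnit.of_mul_eq_one (a := z)
    ⟨zc (-b*d^2 - 2*b*c*d - b^3 + 2*a*d^2 + 2*a*c*d + a*c^2 + 2*a^2*b + a^3)
      (b*d^2 + b*c^2 + b^3 - a*d^2 - 2*a*c*d - a*b^2 - a^2*b)
      (d^3 - 2*c^2*d - c^3 + b^2*d - 2*b^2*c + 2*a*b*d - 2*a*b*c - a^2*c)
      (-d^3 + c*d^2 + c^2*d - b^2*d + b^2*c + 2*a*b*c - a^2*d), zc_mem _ _ _ _⟩ ?_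
  apply Subtype.ext
  push_cast [hz]
  rw [zc_mul_inv, hN, ← zc_one]

lemma one_add_iK_eq : (1 : K) + iK = zc 1 0 1 0 := by simp [zc]

lemma norm_split {m n : ℤ} (hm0 : 0 ≤ m) (hm2 : m ≠ 2) (hmul : m * n = 4) :
    m = 1 ∨ n = 1 := by
  have hmd : m ∣ 4 := ⟨n, hmul.symm⟩
  have hm4 : m ≤ 4 := Int.le_of_dvd (by norm_num) hmd
  have hm1 : 1 ≤ m := by
    rcases hm0.eq_or_lt with h | h
    · rw [← h] at hmul; omega
    · omega
  interval_cases m <;> omega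

/-- In ℤ[i,φ], the element 1 + i is irreducible and 2 = (1+i)(1-i). -/
theorem stmt10 :
    Irreducible (⟨1 + iK, one_add_i_mem⟩ : Ziphi) ∧
    (2 : Ziphi) = ⟨1 + iK, one_add_i_mem⟩ * ⟨1 - iK, one_sub_i_mem⟩ := by
  constructor
  · constructor
    · -- not a unit
      rintro ⟨u, hu⟩
      have h1 : ((u : Ziphi) : K) = zc 1 0 1 0 := by rw [hu]; exact one_add_iK_eq
      obtain ⟨e, f, g, h, hv⟩ := exists_coords ((u⁻¹ : Ziphiˣ) : Ziphi)
        ((u⁻¹ : Ziphiˣ) : Ziphi).2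
      have hmul : ((u : Ziphi) : K) * (((u⁻¹ : Ziphiˣ) : Ziphi) : K) = 1 := by
        have := congrArg (Subtype.val) u.mul_inv
        push_cast at this
        exact this
      rw [h1, hv, zc_mul, zc_one] at hmul
      obtain ⟨hA, hB, hC, hD⟩ := zc_inj hmul.symm
      have hNmul := Nf_mul 1 0 1 0 e f g h
      rw [← hA, ← hB, ← hC, ← hD] at hNmul
      have h4 : Nf 1 0 1 0 = 4 := by decide
      have h1' : Nf 1 0 0 0 = 1 := by decide
      rw [h4, h1'] at hNmul
      have := Nf_nonneg e f g h
      omega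
    · -- every factorization has a unit factor
      rintro ⟨x, hx⟩ ⟨y, hy⟩ hxy
      obtain ⟨a, b, c, d, hxc⟩ := exists_coords x hx
      obtain ⟨e, f, g, h, hyc⟩ := exists_coords y hy
      have hK : (1 : K) + iK = x * y := congrArg Subtype.val hxy
      rw [hxc, hyc, zc_mul, one_add_iK_eq] at hK
      obtain ⟨hA, hB, hC, hD⟩ := zc_inj hK
      have hNmul := Nf_mul a b c d e f g h
      rw [← hA, ← hB, ← hC, ← hD] at hNmul
      have h4 : Nf 1 0 1 0 = 4 := by decide
      rw [h4] at hNmul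
      rcases norm_split (Nf_nonneg a b c d) (Nf_ne_two a b c d) hNmul.symm with hc | hc
      · exact Or.inl (isUnit_of_norm_one _ a b c d hxc hc)
      · exact Or.inr (isUnit_of_norm_one _ e f g h hyc hc)
  · apply Subtype.ext
    have h2 : ((2 : Ziphi) : K) = 2 := by norm_cast
    push_cast [h2]
    linear_combination iK_sq
end
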